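/- Let (R, m) be a Noetherian local ring of Krull dimension n, and let a_•, b_•, c_• be m-filtrations on R. Suppose there are real numbers e_a, e_b, e_c, e_{ab}, e_{bc}, e_{ac} such that, as the positive integer m → ∞, n!·ℓ_R(R/a_m)/m^n → e_a, n!·ℓ_R(R/b_m)/m^n → e_b, n!·ℓ_R(R/c_m)/m^n → e_c, n!·ℓ_R(R/(a_m ∩ b_m))/m^n → e_{ab}, n!·ℓ_R(R/(b_m ∩ c_m))/m^n → e_{bc}, and n!·ℓ_R(R/(a_m ∩ c_m))/m^n → e_{ac}. Then 2e_{ac} − e_a − e_c ≤ (2e_{ab} − e_a − e_b) + (2e_{bc} − e_b − e_c); that is, the function d_1 defined by d_1(a_•, b_•) := 2e(a_•∩b_•) − e(a_•) − e(b_•) satisfies the triangle inequality. -/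

import Mathlib

open IsLocalRing

variable {R : Type*} [CommRing R] [IsNoetherianRing R] [IsLocalRing R]

/-- An ideal is `m`-primary: proper with radical the maximal ideal. -/
def IsPrimaryToMax (R : Type*) [CommRing R] [IsLocalRing R] (I : Ideal R) : Prop :=
  I ≠ ⊤ ∧ I.radical = maximalIdeal R

/-- An `m`-filtration on a Noetherian local ring `(R, m)`: a family of `m`-primary ideals
indexed by `ℝ` (only the values at `λ > 0` matter, with the convention `a 0 = R`),
decreasing, left-continuous and multiplicative. -/
structure IsMFiltration (R : Type*) [CommRing R] [IsLocalRing R] (a : ℝ → Ideal R) : Prop where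
  primary : ∀ lam : ℝ, 0 < lam → IsPrimaryToMax R (a lam)
  antitone : ∀ lam mu : ℝ, 0 < mu → mu < lam → a lam ≤ a mu
  left_cont : ∀ lam : ℝ, 0 < lam → ∃ ε > (0 : ℝ), ∀ ε' : ℝ, 0 < ε' → ε' ≤ ε →
    a (lam - ε') = a lam
  mul : ∀ lam mu : ℝ, 0 < lam → 0 < mu → a lam * a mu ≤ a (lam + mu)
  zero : a 0 = ⊤

/-- The length `ℓ_R(R/I)` as a real number: the supremum of lengths of strictly
increasing chains of submodules of `R/I` (Krull dimension of the submodule lattice),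
truncated to a natural number (it is finite for `m`-primary `I`) and cast to `ℝ`. -/
noncomputable def colengthR (R : Type*) [CommRing R] (I : Ideal R) : ℝ :=
  ((WithBot.unbotD 0 (Order.krullDim (Submodule R (R ⧸ I)))).toNat : ℝ)

set_option linter.unusedSectionVars false



open Order

lemma height_add_one_le' {α : Type*} [Preorder α] {x y : α} (h : x < y) :
    Order.height x + 1 ≤ Order.height y := by
  by_cases hx : Order.height x = ⊤
  · have : Order.height x ≤ Order.height y := Order.height_mono h.le
    rw [hx] at this
    rw [top_le_iff.mp this]
    exact le_top
  · exact (ENat.add_one_le_iff hx).mpr (Order.height_strictMono h (lt_top_iff_ne_top.mpr hx))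

lemma LTSeries_length_le_height_add {α β γ : Type*} [Preorder α] [Preorder β] [Preorder γ]
    {f : α → β} {g : α → γ} (hf : Monotone f) (hg : Monotone g)
    (hs : ∀ x y : α, x < y → f x < f y ∨ g x < g y) :
    ∀ (k : ℕ) (p : LTSeries α), p.length = k →
      (k : ℕ∞) ≤ Order.height (f p.last) + Order.height (g p.last) := by
  intro k
  induction k with
  | zero => intro p _; simp
  | succ k ih =>
      intro p hp
      have hne : p.length ≠ 0 := by omega
      have hq : p.eraseLast.length = k := by simp [hp]
      have hlt : p.eraseLast.last < p.last := p.eraseLast_last_rel_last hne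
      have H := ih p.eraseLast hq
      rcases hs _ _ hlt with h | h
      · calc (k + 1 : ℕ∞) ≤ (Order.height (f p.eraseLast.last) + Order.height (g p.eraseLast.last)) + 1 := by
              exact add_le_add_left H 1
          _ = (Order.height (f p.eraseLast.last) + 1) + Order.height (g p.eraseLast.last) := by
              ring
          _ ≤ Order.height (f p.last) + Order.height (g p.last) :=
              add_le_add (height_add_one_le' h) (Order.height_mono (hg hlt.le))
      · calc (k + 1 : ℕ∞) ≤ (Order.height (f p.eraseLast.last) + Order.height (g p.eraseLast.last)) + 1 := by
              exact add_le_add_left H 1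
          _ = Order.height (f p.eraseLast.last) + (Order.height (g p.eraseLast.last) + 1) := by
              ring
          _ ≤ Order.height (f p.last) + Order.height (g p.last) :=
              add_le_add (Order.height_mono (hf hlt.le)) (height_add_one_le' h)

lemma krullDim_le_add_of {α β γ : Type*} [Preorder α] [Preorder β] [Preorder γ]
    {f : α → β} {g : α → γ} (hf : Monotone f) (hg : Monotone g)
    (hs : ∀ x y : α, x < y → f x < f y ∨ g x < g y) :
    Order.krullDim α ≤ Order.krullDim β + Order.krullDim γ := by
  cases isEmpty_or_nonempty α with
  | inl h => rw [Order.krullDim_eq_bot]; exact bot_le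
  | inr h =>
      rw [Order.krullDim]
      apply iSup_le
      intro p
      have H := LTSeries_length_le_height_add hf hg hs p.length p rfl
      calc (p.length : WithBot ℕ∞)
          ≤ ((Order.height (f p.last) + Order.height (g p.last) : ℕ∞) : WithBot ℕ∞) := by
            exact_mod_cast H
        _ = (Order.height (f p.last) : WithBot ℕ∞) + (Order.height (g p.last) : WithBot ℕ∞) := by
            push_cast; rfl
        _ ≤ Order.krullDim β + Order.krullDim γ :=
            add_le_add (Order.height_le_krullDim _) (Order.height_le_krullDim _)


open Order

section
variable {α : Type*} [Preorder α]

lemma krullDim_Ici_mono {x y : α} (h : x ≤ y) :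
    Order.krullDim (Set.Ici y) ≤ Order.krullDim (Set.Ici x) := by
  apply Order.krullDim_le_of_strictMono (fun z => ⟨z.1, le_trans h z.2⟩)
  intro z w hzw
  exact hzw

lemma krullDim_Icc_add_Ici_le {a b : α} (hab : a ≤ b) :
    Order.krullDim (Set.Icc a b) + Order.krullDim (Set.Ici b) ≤ Order.krullDim (Set.Ici a) := by
  haveI : Nonempty (Set.Ici a) := ⟨⟨a, le_refl a⟩⟩
  set b' : Set.Ici a := ⟨b, hab⟩ with hb'
  have h1 : Order.krullDim (Set.Icc a b) ≤ (Order.height b' : WithBot ℕ∞) := by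
    rw [Order.krullDim]
    apply iSup_le
    intro p
    have hmono : StrictMono (fun z : Set.Icc a b => (⟨z.1, z.2.1⟩ : Set.Ici a)) :=
      fun z w h => h
    have := Order.length_le_height (p := p.map _ hmono) (x := b')
      (by exact p.last.2.2)
    exact_mod_cast (by simpa using this : (p.length : ℕ∞) ≤ Order.height b')
  have h2 : Order.krullDim (Set.Ici b) ≤ (Order.coheight b' : WithBot ℕ∞) := by
    rw [Order.krullDim]
    apply iSup_le
    intro p
    have hmono : StrictMono (fun z : Set.Ici b => (⟨z.1, le_trans hab z.2⟩ : Set.Ici a)) :=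
      fun z w h => h
    have := Order.length_le_coheight (p := p.map _ hmono) (x := b')
      (show b' ≤ _ from p.head.2)
    exact_mod_cast (by simpa using this : (p.length : ℕ∞) ≤ Order.coheight b')
  calc Order.krullDim (Set.Icc a b) + Order.krullDim (Set.Ici b)
      ≤ (Order.height b' : WithBot ℕ∞) + (Order.coheight b' : WithBot ℕ∞) := add_le_add h1 h2
    _ = ((Order.height b' + Order.coheight b' : ℕ∞) : WithBot ℕ∞) := by push_cast; rfl
    _ ≤ Order.krullDim (Set.Ici a) := by
        rw [Order.krullDim_eq_iSup_height_add_coheight_of_nonempty]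
        exact_mod_cast le_iSup (fun x : Set.Ici a => Order.height x + Order.coheight x) b'
end
lemma krullDim_Ici_inf_le {α : Type*} [Lattice α] [IsModularLattice α] (x y : α) :
    Order.krullDim (Set.Ici (x ⊓ y)) ≤
      Order.krullDim (Set.Ici x) + Order.krullDim (Set.Icc y (x ⊔ y)) := by
  have memIcc : ∀ z : Set.Ici (x ⊓ y), z.1 ⊓ x ∈ Set.Icc (x ⊓ y) x := fun z =>
    ⟨le_inf z.2 inf_le_left, inf_le_right⟩
  have hfm : Monotone (fun z : Set.Ici (x ⊓ y) => (⟨z.1 ⊔ x, le_sup_right⟩ : Set.Ici x)) :=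
    fun z w h => sup_le_sup_right (show z.1 ≤ w.1 from h) x
  have hgm : Monotone (fun z : Set.Ici (x ⊓ y) =>
      (⟨(z.1 ⊓ x) ⊔ y, le_sup_right, sup_le (le_trans inf_le_right le_sup_left) le_sup_right⟩ :
        Set.Icc y (x ⊔ y))) :=
    fun z w h => sup_le_sup_right (inf_le_inf_right x (show z.1 ≤ w.1 from h)) y
  apply krullDim_le_add_of hfm hgm
  intro z w hzw
  by_contra hcon
  push_neg at hcon
  obtain ⟨h1, h2⟩ := hcon
  have e1 : z.1 ⊔ x = w.1 ⊔ x :=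
    congrArg Subtype.val ((hfm hzw.le).lt_or_eq.resolve_left h1)
  have e2' : (z.1 ⊓ x) ⊔ y = (w.1 ⊓ x) ⊔ y :=
    congrArg Subtype.val ((hgm hzw.le).lt_or_eq.resolve_left h2)
  have e2 : z.1 ⊓ x = w.1 ⊓ x := by
    have := (infIccOrderIsoIccSup x y).injective
      (a₁ := ⟨z.1 ⊓ x, memIcc z⟩) (a₂ := ⟨w.1 ⊓ x, memIcc w⟩) (by
        apply Subtype.ext
        simpa using e2')
    exact congrArg Subtype.val this
  have : z.1 = w.1 :=
    eq_of_le_of_inf_le_of_sup_le hzw.le (le_of_eq e2.symm) (le_of_eq e1.symm)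
  exact hzw.ne (Subtype.ext this)

lemma krullDim_Ici_submodular {α : Type*} [Lattice α] [IsModularLattice α] (x y : α) :
    Order.krullDim (Set.Ici (x ⊓ y)) + Order.krullDim (Set.Ici (x ⊔ y)) ≤
      Order.krullDim (Set.Ici x) + Order.krullDim (Set.Ici y) := by
  calc Order.krullDim (Set.Ici (x ⊓ y)) + Order.krullDim (Set.Ici (x ⊔ y))
      ≤ (Order.krullDim (Set.Ici x) + Order.krullDim (Set.Icc y (x ⊔ y))) +
          Order.krullDim (Set.Ici (x ⊔ y)) :=
        add_le_add_left (krullDim_Ici_inf_le x y) _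
    _ = Order.krullDim (Set.Ici x) +
          (Order.krullDim (Set.Icc y (x ⊔ y)) + Order.krullDim (Set.Ici (x ⊔ y))) := by
        rw [add_assoc]
    _ ≤ Order.krullDim (Set.Ici x) + Order.krullDim (Set.Ici y) :=
        add_le_add_right (krullDim_Icc_add_Ici_le le_sup_right) _
lemma krullDim_le_one_of_simpleOrder (α : Type*) [PartialOrder α] [BoundedOrder α]
    [IsSimpleOrder α] : Order.krullDim α ≤ ((1 : ℕ) : WithBot ℕ∞) := by
  rw [Order.krullDim]
  apply iSup_le
  intro p
  suffices h : p.length ≤ 1 by exact_mod_cast h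
  by_contra h
  push_neg at h
  have h01 : p ⟨0, by omega⟩ < p ⟨1, by omega⟩ := p.strictMono (by simp [Fin.lt_def])
  have h12 : p ⟨1, by omega⟩ < p ⟨2, by omega⟩ := p.strictMono (by simp [Fin.lt_def])
  rcases IsSimpleOrder.eq_bot_or_eq_top (p ⟨1, by omega⟩) with h1 | h1
  · rw [h1] at h01; exact not_lt_bot h01
  · rw [h1] at h12; exact not_top_lt h12

lemma exists_nat_krullDim_submodule_le {R M : Type*} [Ring R] [AddCommGroup M] [Module R M]
    (h : IsFiniteLength R M) :
    ∃ k : ℕ, Order.krullDim (Submodule R M) ≤ ((k : ℕ) : WithBot ℕ∞) := by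
  induction' h with M _ _ _ M _ _ N _ hfl ih
  · haveI : Subsingleton (Submodule R M) :=
      ⟨fun A B => by
        ext x
        have : x = 0 := Subsingleton.elim x 0
        simp [this]⟩
    exact ⟨0, by simpa using Order.krullDim_nonpos_of_subsingleton⟩
  · obtain ⟨k, hk⟩ := ih
    refine ⟨k + 1, ?_⟩
    have hfm : Monotone (fun x : Submodule R M => Submodule.comap N.subtype x) :=
      fun x y h => Submodule.comap_mono h
    have hgm : Monotone (fun x : Submodule R M => Submodule.map N.mkQ x) :=
      fun x y h => Submodule.map_mono h
    have key := krullDim_le_add_of hfm hgm (by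
      intro x y hxy
      by_contra hcon
      push_neg at hcon
      obtain ⟨h1, h2⟩ := hcon
      have e1 : Submodule.comap N.subtype x = Submodule.comap N.subtype y :=
        (hfm hxy.le).lt_or_eq.resolve_left h1
      have e1' : N ⊓ x = N ⊓ y := by
        rw [← Submodule.map_comap_subtype, e1, Submodule.map_comap_subtype]
      have e2 : Submodule.map N.mkQ x = Submodule.map N.mkQ y :=
        (hgm hxy.le).lt_or_eq.resolve_left h2
      have e2' : N ⊔ x = N ⊔ y := by
        rw [← Submodule.comap_map_mkQ, e2, Submodule.comap_map_mkQ]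
      have : x = y := by
        apply eq_of_le_of_inf_le_of_sup_le (z := N) hxy.le
        · exact le_of_eq (by rw [inf_comm, ← e1', inf_comm])
        · exact le_of_eq (by rw [sup_comm, ← e2', sup_comm])
      exact hxy.ne this)
    refine key.trans ?_
    have h2 : Order.krullDim (Submodule R (M ⧸ N)) ≤ ((1 : ℕ) : WithBot ℕ∞) :=
      krullDim_le_one_of_simpleOrder _
    calc Order.krullDim (Submodule R ↥N) + Order.krullDim (Submodule R (M ⧸ N))
        ≤ ((k : ℕ) : WithBot ℕ∞) + ((1 : ℕ) : WithBot ℕ∞) := add_le_add hk h2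
      _ = (((k + 1 : ℕ)) : WithBot ℕ∞) := by push_cast; ring
open IsLocalRing in
lemma isArtinian_quotient_of_pow_le {R : Type*} [CommRing R] [IsNoetherianRing R] [IsLocalRing R] :
    ∀ (k : ℕ) (I : Ideal R), maximalIdeal R ^ k ≤ I → IsArtinian R (R ⧸ I) := by
  intro k
  induction k with
  | zero =>
      intro I hI
      rw [pow_zero, Ideal.one_eq_top, top_le_iff] at hI
      haveI : Subsingleton (R ⧸ I) := Submodule.Quotient.subsingleton_iff.mpr hI
      haveI : Finite (R ⧸ I) := Finite.of_subsingleton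
      exact isArtinian_of_finite
  | succ k ih =>
      intro I hI
      set J : Ideal R := I ⊔ maximalIdeal R ^ k with hJ
      have hJle : maximalIdeal R ^ k ≤ J := le_sup_right
      haveI hAJ : IsArtinian R (R ⧸ J) := ih J hJle
      have hIJ : I ≤ J := le_sup_left
      set S : Submodule R (R ⧸ I) := Submodule.map (Submodule.mkQ I) J with hS
      apply (isArtinian_iff_submodule_quotient S).mpr
      constructor
      · -- S is artinian: it is a finite module over the residue field
        have tor : Module.IsTorsionBySet R S (maximalIdeal R : Set R) := by
          rintro ⟨x, hx⟩ ⟨c, hc⟩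
          obtain ⟨r, hrJ, rfl⟩ := hx
          apply Subtype.ext
          show c • Submodule.mkQ I r = 0
          rw [← map_smul, Submodule.mkQ_apply, Submodule.Quotient.mk_eq_zero]
          have hmem : c * r ∈ maximalIdeal R * J := Ideal.mul_mem_mul hc hrJ
          have hle : maximalIdeal R * J ≤ I := by
            calc maximalIdeal R * J
                = maximalIdeal R * I ⊔ maximalIdeal R * maximalIdeal R ^ k := by
                  rw [hJ, Ideal.mul_sup]
              _ ≤ I := sup_le Ideal.mul_le_right (by rw [← pow_succ']; exact hI)
          rw [smul_eq_mul]
          exact hle hmem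
        letI : Module (R ⧸ maximalIdeal R) S := tor.module
        haveI : IsScalarTower R (R ⧸ maximalIdeal R) S := tor.isScalarTower
        haveI : Module.Finite R S := Module.Finite.iff_fg.mpr (IsNoetherian.noetherian _)
        haveI : Module.Finite (R ⧸ maximalIdeal R) S :=
          Module.Finite.of_restrictScalars_finite R (R ⧸ maximalIdeal R) S
        haveI : IsArtinianRing (R ⧸ maximalIdeal R) :=
          inferInstanceAs (IsArtinianRing (ResidueField R))
        haveI hart : IsArtinian (R ⧸ maximalIdeal R) S := isArtinian_of_fg_of_artinian'
        let emb : Submodule R ↥S ↪o Submodule (R ⧸ maximalIdeal R) ↥S :=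
          { toFun := fun p =>
              { carrier := p
                add_mem' := fun h1 h2 => p.add_mem h1 h2
                zero_mem' := p.zero_mem
                smul_mem' := by
                  intro c x hx
                  obtain ⟨r, rfl⟩ := Ideal.Quotient.mk_surjective c
                  rw [tor.mk_smul]
                  exact p.smul_mem r hx }
            inj' := fun p q h => by
              apply SetLike.coe_injective
              exact congrArg (fun (s : Submodule (R ⧸ IsLocalRing.maximalIdeal R) ↥S) => (s : Set ↥S)) h
            map_rel_iff' := Iff.rfl }
        exact ⟨emb.wellFounded hart.wf⟩
      · -- the quotient is artinian
        have e : ((R ⧸ I) ⧸ S) ≃ₗ[R] R ⧸ J :=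
          Submodule.quotientQuotientEquivQuotient I J hIJ
        exact isArtinian_of_linearEquiv e.symm

lemma toNat_repr {d : WithBot ℕ∞} {k : ℕ} (h0 : 0 ≤ d) (hk : d ≤ ((k : ℕ∞) : WithBot ℕ∞)) :
    d = (((WithBot.unbotD 0 d).toNat : ℕ∞) : WithBot ℕ∞) := by
  cases d with
  | bot => simp at h0
  | coe e =>
      have he : e ≠ ⊤ := by
        intro h
        rw [h] at hk
        rw [WithBot.coe_le_coe] at hk
        simp at hk
      rw [WithBot.unbotD_coe, ENat.coe_toNat he]

lemma dim_Ici_eq {R : Type*} [CommRing R] (I : Ideal R) :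
    Order.krullDim (Submodule R (R ⧸ I)) = Order.krullDim (Set.Ici I) :=
  Order.krullDim_eq_of_orderIso (Submodule.comapMkQRelIso I)

lemma primary_inf {I J : Ideal R} (hI : IsPrimaryToMax R I) (hJ : IsPrimaryToMax R J) :
    IsPrimaryToMax R (I ⊓ J) := by
  constructor
  · intro h
    exact hI.1 (top_le_iff.mp (le_trans (le_of_eq h.symm) inf_le_left))
  · rw [Ideal.radical_inf, hI.2, hJ.2, inf_idem]

lemma exists_eq_nat {I : Ideal R} (hI : IsPrimaryToMax R I) :
    ∃ L : ℕ, Order.krullDim (Submodule R (R ⧸ I)) = ((L : ℕ∞) : WithBot ℕ∞) ∧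
      colengthR R I = (L : ℝ) := by
  obtain ⟨n, hn⟩ := Ideal.exists_radical_pow_le_of_fg I
    (by rw [hI.2]; exact IsNoetherian.noetherian _)
  rw [hI.2] at hn
  haveI hart : IsArtinian R (R ⧸ I) := isArtinian_quotient_of_pow_le n I hn
  haveI hnoe : IsNoetherian R (R ⧸ I) := inferInstance
  obtain ⟨k, hk⟩ := exists_nat_krullDim_submodule_le
    (isFiniteLength_iff_isNoetherian_isArtinian.mpr ⟨hnoe, hart⟩)
  have h0 : 0 ≤ Order.krullDim (Submodule R (R ⧸ I)) := Order.krullDim_nonneg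
  have hk' : Order.krullDim (Submodule R (R ⧸ I)) ≤ ((k : ℕ∞) : WithBot ℕ∞) := by
    exact_mod_cast hk
  exact ⟨(WithBot.unbotD 0 (Order.krullDim (Submodule R (R ⧸ I)))).toNat, toNat_repr h0 hk', rfl⟩

lemma colength_ineq {a b c : Ideal R} (ha : IsPrimaryToMax R a) (hb : IsPrimaryToMax R b)
    (hc : IsPrimaryToMax R c) :
    colengthR R (a ⊓ c) + colengthR R b ≤ colengthR R (a ⊓ b) + colengthR R (b ⊓ c) := by
  obtain ⟨L1, hd1, hc1⟩ := exists_eq_nat (primary_inf ha hc)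
  obtain ⟨L2, hd2, hc2⟩ := exists_eq_nat hb
  obtain ⟨L3, hd3, hc3⟩ := exists_eq_nat (primary_inf ha hb)
  obtain ⟨L4, hd4, hc4⟩ := exists_eq_nat (primary_inf hb hc)
  have main : Order.krullDim (Submodule R (R ⧸ (a ⊓ c))) +
      Order.krullDim (Submodule R (R ⧸ b)) ≤
      Order.krullDim (Submodule R (R ⧸ (a ⊓ b))) +
      Order.krullDim (Submodule R (R ⧸ (b ⊓ c))) := by
    rw [dim_Ici_eq, dim_Ici_eq, dim_Ici_eq, dim_Ici_eq]
    have h1 : Order.krullDim (Set.Ici (a ⊓ c)) ≤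
        Order.krullDim (Set.Ici ((a ⊓ b) ⊓ (b ⊓ c))) :=
      krullDim_Ici_mono (le_inf (inf_le_left.trans inf_le_left)
        (inf_le_right.trans inf_le_right))
    have h2 : Order.krullDim (Set.Ici b) ≤
        Order.krullDim (Set.Ici ((a ⊓ b) ⊔ (b ⊓ c))) :=
      krullDim_Ici_mono (sup_le inf_le_right inf_le_left)
    exact le_trans (add_le_add h1 h2) (krullDim_Ici_submodular (a ⊓ b) (b ⊓ c))
  rw [hd1, hd2, hd3, hd4] at main
  have hnat : L1 + L2 ≤ L3 + L4 := by exact_mod_cast main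
  rw [hc1, hc2, hc3, hc4]
  exact_mod_cast hnat


/-- Triangle inequality for `d₁`: if the normalized colengths of the filtrations
`a_•`, `b_•`, `c_•` and of their pairwise intersections converge (to the multiplicities
`e(·)`), then `d₁(a_•, c_•) ≤ d₁(a_•, b_•) + d₁(b_•, c_•)`, where
`d₁(a_•, b_•) = 2e(a_• ∩ b_•) − e(a_•) − e(b_•)`. -/
theorem d1_triangle_ineq (n : ℕ) (hdim : ringKrullDim R = n)
    (a b c : ℝ → Ideal R)
    (ha : IsMFiltration R a) (hb : IsMFiltration R b) (hc : IsMFiltration R c)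
    (ea eb ec eab ebc eac : ℝ)
    (hea : Filter.Tendsto (fun m : ℕ =>
      (n.factorial : ℝ) * colengthR R (a m) / (m : ℝ) ^ n) Filter.atTop (nhds ea))
    (heb : Filter.Tendsto (fun m : ℕ =>
      (n.factorial : ℝ) * colengthR R (b m) / (m : ℝ) ^ n) Filter.atTop (nhds eb))
    (hec : Filter.Tendsto (fun m : ℕ =>
      (n.factorial : ℝ) * colengthR R (c m) / (m : ℝ) ^ n) Filter.atTop (nhds ec))
    (heab : Filter.Tendsto (fun m : ℕ =>
      (n.factorial : ℝ) * colengthR R (a m ⊓ b m) / (m : ℝ) ^ n) Filter.atTop (nhds eab))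
    (hebc : Filter.Tendsto (fun m : ℕ =>
      (n.factorial : ℝ) * colengthR R (b m ⊓ c m) / (m : ℝ) ^ n) Filter.atTop (nhds ebc))
    (heac : Filter.Tendsto (fun m : ℕ =>
      (n.factorial : ℝ) * colengthR R (a m ⊓ c m) / (m : ℝ) ^ n) Filter.atTop (nhds eac)) :
    2 * eac - ea - ec ≤ (2 * eab - ea - eb) + (2 * ebc - eb - ec) := by
  have key : ∀ᶠ (m : ℕ) in Filter.atTop,
      (n.factorial : ℝ) * colengthR R (a m ⊓ c m) / (m : ℝ) ^ n +
        (n.factorial : ℝ) * colengthR R (b m) / (m : ℝ) ^ n ≤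
      (n.factorial : ℝ) * colengthR R (a m ⊓ b m) / (m : ℝ) ^ n +
        (n.factorial : ℝ) * colengthR R (b m ⊓ c m) / (m : ℝ) ^ n := by
    filter_upwards [Filter.eventually_ge_atTop 1] with m hm
    have hm0 : (0 : ℝ) < (m : ℝ) := by exact_mod_cast Nat.lt_of_lt_of_le Nat.zero_lt_one hm
    have hineq := colength_ineq (ha.primary _ hm0) (hb.primary _ hm0) (hc.primary _ hm0)
    have hpow : (0 : ℝ) < (m : ℝ) ^ n := pow_pos hm0 n
    rw [← add_div, ← add_div, ← mul_add, ← mul_add]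
    apply div_le_div_of_nonneg_right ?_ hpow.le
    exact mul_le_mul_of_nonneg_left hineq (by positivity)
  have t1 := Filter.Tendsto.add heac heb
  have t2 := Filter.Tendsto.add heab hebc
  have hle := le_of_tendsto_of_tendsto t1 t2 key
  linarith
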